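/- Let ξ > 0 and let ξΣ̂ − Z = U diag(σ) Uᵀ be an eigendecomposition with U orthogonal. Define R = U diag(γ) Uᵀ where γᵢ = (−σᵢ + √(σᵢ² + 4ξ))/2. Then R is positive definite and satisfies the first-order optimality condition R + ξΣ̂ − Z − ξR⁻¹ = 0. -/

import Mathlib

open Matrix

theorem stmt1 (p : ℕ) (ξ : ℝ) (hξ : 0 < ξ)
    (Sig Z U : Matrix (Fin p) (Fin p) ℝ) (σ γ : Fin p → ℝ)
    (hSig : Sigᵀ = Sig) (hZ : Zᵀ = Z)
    (hU : U * Uᵀ = 1) (hU' : Uᵀ * U = 1)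
    (hdecomp : ξ • Sig - Z = U * Matrix.diagonal σ * Uᵀ)
    (hγ : ∀ i, γ i = (-σ i + Real.sqrt (σ i ^ 2 + 4 * ξ)) / 2)
    (R : Matrix (Fin p) (Fin p) ℝ) (hR : R = U * Matrix.diagonal γ * Uᵀ) :
    R.PosDef ∧ R + ξ • Sig - Z - ξ • R⁻¹ = 0 := by
  have hs : ∀ i, (Real.sqrt (σ i ^ 2 + 4 * ξ)) ^ 2 = σ i ^ 2 + 4 * ξ := fun i =>
    Real.sq_sqrt (by positivity)
  have hγpos : ∀ i, 0 < γ i := by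
    intro i
    have h1 : |σ i| < Real.sqrt (σ i ^ 2 + 4 * ξ) := by
      have := Real.sqrt_lt_sqrt (by positivity : (0:ℝ) ≤ σ i ^ 2)
        (by linarith : σ i ^ 2 < σ i ^ 2 + 4 * ξ)
      rwa [Real.sqrt_sq_eq_abs] at this
    have := abs_lt.mp h1
    rw [hγ i]; linarith [this.1]
  have hγne : ∀ i, γ i ≠ 0 := fun i => (hγpos i).ne'
  have hkey : ∀ i, γ i * γ i + σ i * γ i = ξ := by
    intro i
    have := hs i
    rw [hγ i]
    nlinarith [this]
  -- PosDef
  have hDpos : (Matrix.diagonal γ).PosDef := Matrix.PosDef.diagonal hγpos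
  have hRherm : R.IsHermitian := by
    rw [hR]
    unfold Matrix.IsHermitian
    simp [Matrix.mul_assoc]
  have hRpd : R.PosDef := by
    refine Matrix.PosDef.of_dotProduct_mulVec_pos hRherm fun x hx => ?_
    have hy : Uᵀ *ᵥ x ≠ 0 := by
      intro h
      apply hx
      have : U *ᵥ (Uᵀ *ᵥ x) = x := by
        rw [mulVec_mulVec, hU, one_mulVec]
      rw [h, mulVec_zero] at this
      exact this.symm
    have := hDpos.dotProduct_mulVec_pos hy
    simp only [star_trivial] at this ⊢
    rw [hR, ← mulVec_mulVec, ← mulVec_mulVec, dotProduct_mulVec, ← mulVec_transpose]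
    exact this
  refine ⟨hRpd, ?_⟩
  set g : Fin p → ℝ := fun i => (γ i)⁻¹ with hg
  have hRinv : R⁻¹ = U * Matrix.diagonal g * Uᵀ := by
    apply Matrix.inv_eq_right_inv
    rw [hR]
    have h1 : (U * Matrix.diagonal γ * Uᵀ) * (U * Matrix.diagonal g * Uᵀ)
        = U * (Matrix.diagonal γ * ((Uᵀ * U) * (Matrix.diagonal g * Uᵀ))) := by
      simp only [Matrix.mul_assoc]
    rw [h1, hU', Matrix.one_mul, ← Matrix.mul_assoc (Matrix.diagonal γ),
      diagonal_mul_diagonal]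
    have : (fun i => γ i * g i) = fun _ => (1:ℝ) := by
      funext i; exact mul_inv_cancel₀ (hγne i)
    rw [this, diagonal_one, Matrix.one_mul, hU]
  have hz : Matrix.diagonal γ + Matrix.diagonal σ - ξ • Matrix.diagonal g = 0 := by
    ext i j
    by_cases h : i = j
    · subst h
      have hk := hkey i
      have hξg : ξ * g i = γ i + σ i := by
        rw [hg, mul_inv_eq_iff_eq_mul₀ (hγne i)]
        nlinarith [hk]
      simp [Matrix.diagonal_apply_eq, hξg]
    · simp [Matrix.diagonal_apply_ne _ h, h]
  have hstep : R + ξ • Sig - Z - ξ • R⁻¹ = R + (ξ • Sig - Z) - ξ • R⁻¹ := by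
    rw [add_sub_assoc]
  rw [hstep, hdecomp, hRinv, hR]
  have hcomb : U * Matrix.diagonal γ * Uᵀ + U * Matrix.diagonal σ * Uᵀ
      - ξ • (U * Matrix.diagonal g * Uᵀ)
      = U * (Matrix.diagonal γ + Matrix.diagonal σ - ξ • Matrix.diagonal g) * Uᵀ := by
    rw [Matrix.mul_sub, Matrix.mul_add, Matrix.sub_mul, Matrix.add_mul,
      Matrix.mul_smul, Matrix.smul_mul]
  rw [hcomb, hz, Matrix.mul_zero, Matrix.zero_mul]
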